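/- Let A ∈ 𝓡 be a fixed set and let X^(1), X^(2) be (arbitrarily dependent) random vectors in [0,∞)^d with distributions F_1, F_2 respectively, satisfying the weak tail equivalence F_1(xA) ≍ F_2(xA). (i) If F_1 ∈ 𝓢_A and F_2 ∈ 𝓛_A, then F_2 ∈ 𝓢_A. (ii) If F_1 ∈ 𝓐_A and F_2 ∈ 𝓣_A, then F_2 ∈ 𝓐_A. -/

import Mathlib

open MeasureTheory ProbabilityTheory Filter Topology
open scoped Pointwise

namespace Paper

variable {d : ℕ} {Ω : Type*} [MeasurableSpace Ω]

/-- The family `𝓡` of open, increasing sets with convex complement, bounded away from `0`. -/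
structure IsRSet (d : ℕ) (A : Set (Fin d → ℝ)) : Prop where
  isOpen : IsOpen A
  increasing : ∀ u ∈ A, ∀ v : Fin d → ℝ, (∀ i, 0 ≤ v i) → u + v ∈ A
  convex_compl : Convex ℝ Aᶜ
  zero_notMem_closure : (0 : Fin d → ℝ) ∉ closure A

/-- `Y_A(z) = sup { u > 0 : z ∈ u A }`. -/
noncomputable def suprA (A : Set (Fin d → ℝ)) (z : Fin d → ℝ) : ℝ :=
  sSup {u : ℝ | 0 < u ∧ z ∈ u • A}

/-- `F_A`, the distribution of `Y_A = suprA A ∘ X` under `P`. -/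
noncomputable def FA (P : Measure Ω) (A : Set (Fin d → ℝ)) (X : Ω → Fin d → ℝ) :
    Measure ℝ :=
  P.map (fun ω => suprA A (X ω))

/-- `F (x A) = P[X ∈ x A]` as a real number. -/
noncomputable def vTail (P : Measure Ω) (A : Set (Fin d → ℝ)) (X : Ω → Fin d → ℝ)
    (x : ℝ) : ℝ :=
  (P {ω | X ω ∈ x • A}).toReal

/-- Tail `ν(x, ∞)` of a measure on `ℝ`, as a real number. -/
noncomputable def mTail (ν : Measure ℝ) (x : ℝ) : ℝ := (ν (Set.Ioi x)).toReal

/-- Convolution of two measures on `ℝ`. -/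
noncomputable def mConv (μ ν : Measure ℝ) : Measure ℝ :=
  (μ.prod ν).map (fun p => p.1 + p.2)

/-- `n`-fold convolution power. -/
noncomputable def mConvN (ν : Measure ℝ) : ℕ → Measure ℝ
  | 0 => Measure.dirac 0
  | n + 1 => mConv (mConvN ν n) ν

/-- Long-tailed class `𝓛`. -/
def MemL (ν : Measure ℝ) : Prop :=
  ∀ a : ℝ, 0 < a → Tendsto (fun x => mTail ν (x - a) / mTail ν x) atTop (𝓝 1)

/-- Subexponential class `𝓢`. -/
def MemS (ν : Measure ℝ) : Prop :=
  Tendsto (fun x => mTail (mConv ν ν) x / mTail ν x) atTop (𝓝 2)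

/-- Dominatedly varying class `𝓓`. -/
def MemD (ν : Measure ℝ) : Prop :=
  ∀ y : ℝ, 0 < y → y < 1 → ∃ C : ℝ, ∀ᶠ x in atTop, mTail ν (y * x) / mTail ν x ≤ C

/-- Positively decreasing class `𝓟𝓓`. -/
def MemPD (ν : Measure ℝ) : Prop :=
  ∀ b : ℝ, 1 < b → ∃ c : ℝ, c < 1 ∧ ∀ᶠ x in atTop, mTail ν (b * x) / mTail ν x ≤ c

/-- Consistently varying class `𝓒`. -/
def MemC (ν : Measure ℝ) : Prop :=
  Tendsto (fun b : ℝ => Filter.liminf (fun x => mTail ν (b * x) / mTail ν x) atTop)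
    (nhdsWithin 1 (Set.Ioi 1)) (𝓝 1)

/-- `𝓐 = 𝓢 ∩ 𝓟𝓓`. -/
def MemA (ν : Measure ℝ) : Prop := MemS ν ∧ MemPD ν

/-- `𝓣 = 𝓛 ∩ 𝓟𝓓`. -/
def MemT (ν : Measure ℝ) : Prop := MemL ν ∧ MemPD ν

/-- Regular variation of index `-α` of the tail of `ν`. -/
def MemRV (ν : Measure ℝ) (α : ℝ) : Prop :=
  ∀ t : ℝ, 0 < t → Tendsto (fun x => mTail ν (t * x) / mTail ν x) atTop (𝓝 (t ^ (-α)))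

/-- Weak tail-equivalence `f ≍ g`. -/
def WeakTailEquiv (f g : ℝ → ℝ) : Prop :=
  ∃ c₁ c₂ : ℝ, 0 < c₁ ∧ ∀ᶠ x in atTop, c₁ * g x ≤ f x ∧ f x ≤ c₂ * g x

/-- (Standard) multivariate regular variation `F ∈ MRV(α, V, μ)` of the distribution of `X`. -/
structure IsMRV (P : Measure Ω) (X : Ω → Fin d → ℝ) (α : ℝ) (V : Measure ℝ)
    (μ : Measure (Fin d → ℝ)) : Prop where
  alpha_pos : 0 < α
  V_prob : IsProbabilityMeasure V
  V_rv : MemRV V α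
  mu_ne_zero : ∃ B : Set (Fin d → ℝ), (0 : Fin d → ℝ) ∉ closure B ∧ 0 < μ B
  mu_radon : ∀ B : Set (Fin d → ℝ), (0 : Fin d → ℝ) ∉ closure B → μ B ≠ ⊤
  tendsto : ∀ B : Set (Fin d → ℝ), MeasurableSet B → (0 : Fin d → ℝ) ∉ closure B →
    μ (frontier B) = 0 →
    Tendsto (fun x => vTail P B X x / mTail V x) atTop (𝓝 ((μ B).toReal))

/-- Support of a distribution on `ℝ`. -/
def measSupport (ν : Measure ℝ) : Set ℝ := {t | ∀ U ∈ 𝓝 t, 0 < ν U}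

/-- Assumption `CD_A`: conditional dependence of `(X, Θ)` on `A` with transfer function `h`:
`P[Y_A > x | Θ = t] ~ h(t) P[Y_A > x]` uniformly on the support of the distribution of `Θ`. -/
def CDA (P : Measure Ω) [IsFiniteMeasure P] (A : Set (Fin d → ℝ))
    (X : Ω → Fin d → ℝ) (Θ : Ω → ℝ) (h : ℝ → ℝ) : Prop :=
  ∀ ε : ℝ, 0 < ε → ∀ᶠ x in atTop, ∀ t ∈ measSupport (P.map Θ),
    |((condDistrib (fun ω => suprA A (X ω)) Θ P) t (Set.Ioi x)).toReal /
        (h t * (P {ω | x < suprA A (X ω)}).toReal) - 1| ≤ ε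

/-- Assumption `B_A`: `P[Θ > c x] = o(P[Θ Y_A > x])` for all `c > 0`. -/
def BA (P : Measure Ω) (A : Set (Fin d → ℝ)) (X : Ω → Fin d → ℝ) (Θ : Ω → ℝ) : Prop :=
  ∀ c : ℝ, 0 < c →
    Tendsto (fun x => (P {ω | c * x < Θ ω}).toReal /
      (P {ω | x < Θ ω * suprA A (X ω)}).toReal) atTop (𝓝 0)

/-- Assumption `B_A` in the form `P[Θ > c x] = o(P[Θ X ∈ x A])` for all `c > 0`. -/
def BA' (P : Measure Ω) (A : Set (Fin d → ℝ)) (X : Ω → Fin d → ℝ) (Θ : Ω → ℝ) : Prop :=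
  ∀ c : ℝ, 0 < c →
    Tendsto (fun x => (P {ω | c * x < Θ ω}).toReal /
      (P {ω | Θ ω • X ω ∈ x • A}).toReal) atTop (𝓝 0)



section Aux

open Set
open scoped ENNReal

lemma IsRSet.smul_mem {A : Set (Fin d → ℝ)} (hA : IsRSet d A) {a : Fin d → ℝ}
    (ha : a ∈ A) {μ : ℝ} (hμ : 1 ≤ μ) : μ • a ∈ A := by
  by_contra hcon
  have h0 : (0 : Fin d → ℝ) ∈ Aᶜ := fun h => hA.zero_notMem_closure (subset_closure h)
  have hμ0 : 0 < μ := lt_of_lt_of_le one_pos hμ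
  have key := hA.convex_compl hcon h0 (a := μ⁻¹) (b := 1 - μ⁻¹)
    (by positivity) (by simp; exact inv_le_one_of_one_le₀ hμ) (by ring)
  rw [smul_zero, add_zero, smul_smul, inv_mul_cancel₀ hμ0.ne', one_smul] at key
  exact key ha

lemma IsRSet.exists_ball {A : Set (Fin d → ℝ)} (hA : IsRSet d A) :
    ∃ ε > 0, ∀ a ∈ A, ε ≤ ‖a‖ := by
  obtain ⟨ε, hε, hball⟩ := Metric.isOpen_iff.1 (isOpen_compl_iff.2 isClosed_closure)
    0 hA.zero_notMem_closure
  refine ⟨ε, hε, fun a ha => ?_⟩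
  by_contra h
  push_neg at h
  have : a ∈ Metric.ball (0 : Fin d → ℝ) ε := by
    simpa [Metric.mem_ball, dist_eq_norm] using h
  exact hball this (subset_closure ha)

lemma bddAbove_suprA_set {A : Set (Fin d → ℝ)} (hA : IsRSet d A) (z : Fin d → ℝ) :
    BddAbove {u : ℝ | 0 < u ∧ z ∈ u • A} := by
  obtain ⟨ε, hε, hba⟩ := hA.exists_ball
  refine ⟨‖z‖ / ε, fun u hu => ?_⟩
  obtain ⟨hu0, hz⟩ := hu
  obtain ⟨a, ha, rfl⟩ := hz
  have h1 : ε ≤ ‖a‖ := hba a ha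
  have h2 : ‖u • a‖ = u * ‖a‖ := by
    rw [norm_smul, Real.norm_of_nonneg hu0.le]
  show u ≤ ‖u • a‖ / ε
  rw [le_div_iff₀ hε, h2]
  nlinarith [norm_nonneg a]

lemma suprA_nonneg {A : Set (Fin d → ℝ)} (hA : IsRSet d A) (z : Fin d → ℝ) :
    0 ≤ suprA A z := by
  unfold suprA
  rcases eq_or_ne {u : ℝ | 0 < u ∧ z ∈ u • A} ∅ with h | h
  · simp [h]
  · obtain ⟨u, hu⟩ := Set.nonempty_iff_ne_empty.2 h
    exact hu.1.le.trans (le_csSup (bddAbove_suprA_set hA z) hu)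

lemma lt_suprA_iff {A : Set (Fin d → ℝ)} (hA : IsRSet d A) {x : ℝ} (hx : 0 < x)
    (z : Fin d → ℝ) : x < suprA A z ↔ z ∈ x • A := by
  constructor
  · intro h
    have hne : {u : ℝ | 0 < u ∧ z ∈ u • A}.Nonempty := by
      by_contra hc
      rw [Set.not_nonempty_iff_eq_empty] at hc
      rw [suprA, hc, Real.sSup_empty] at h
      linarith
    obtain ⟨u, hu, hxu⟩ := exists_lt_of_lt_csSup hne h
    -- z ∈ u • A with x < u implies z ∈ x • A
    obtain ⟨a, ha, rfl⟩ := hu.2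
    have hx0 : x ≠ 0 := hx.ne'
    rw [mem_smul_set_iff_inv_smul_mem₀ hx0]
    rw [smul_smul]
    have : (x⁻¹ * u) • a = (u / x) • a := by rw [div_eq_inv_mul]
    rw [this]
    exact hA.smul_mem ha ((one_le_div hx).2 hxu.le)
  · intro h
    have hcont : ContinuousAt (fun u : ℝ => u⁻¹ • z) x :=
      (continuousAt_inv₀ hx.ne').smul continuousAt_const
    have hmem : (fun u : ℝ => u⁻¹ • z) x ∈ A := by
      rwa [mem_smul_set_iff_inv_smul_mem₀ hx.ne'] at h
    have hev : ∀ᶠ u in 𝓝 x, (u : ℝ)⁻¹ • z ∈ A := hcont.eventually_mem (hA.isOpen.mem_nhds hmem)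
    have hev' : ∀ᶠ u in 𝓝[>] x, (u : ℝ)⁻¹ • z ∈ A := hev.filter_mono nhdsWithin_le_nhds
    obtain ⟨u, hu, hxu⟩ := (hev'.and self_mem_nhdsWithin).exists
    have huS : u ∈ {u : ℝ | 0 < u ∧ z ∈ u • A} :=
      ⟨hx.trans hxu, by rwa [mem_smul_set_iff_inv_smul_mem₀ (hx.trans hxu).ne']⟩
    exact lt_of_lt_of_le hxu (le_csSup (bddAbove_suprA_set hA z) huS)

lemma preim_Ioi {A : Set (Fin d → ℝ)} (hA : IsRSet d A) {x : ℝ} (hx : 0 < x) :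
    (suprA A) ⁻¹' (Ioi x) = x • A := by
  ext z; exact lt_suprA_iff hA hx z

lemma measurable_suprA {A : Set (Fin d → ℝ)} (hA : IsRSet d A) :
    Measurable (suprA A) := by
  apply measurable_of_Ioi
  intro x
  rcases lt_trichotomy x 0 with h | h | h
  · have : (suprA A) ⁻¹' (Ioi x) = univ := by
      ext z; simpa using lt_of_lt_of_le h (suprA_nonneg hA z)
    rw [this]; exact MeasurableSet.univ
  · subst h
    have : (suprA A) ⁻¹' (Ioi (0:ℝ)) = ⋃ n : ℕ, ((1 : ℝ)/(n+1)) • A := by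
      ext z
      simp only [mem_preimage, mem_Ioi, mem_iUnion]
      constructor
      · intro hz
        obtain ⟨n, hn⟩ := exists_nat_one_div_lt hz
        have hpos : (0:ℝ) < 1/(n+1) := by positivity
        exact ⟨n, (lt_suprA_iff hA hpos z).1 (by exact_mod_cast hn)⟩
      · rintro ⟨n, hn⟩
        have hpos : (0:ℝ) < 1/(n+1) := by positivity
        exact hpos.trans ((lt_suprA_iff hA hpos z).2 hn)
    rw [this]
    exact MeasurableSet.iUnion fun n =>
      ((hA.isOpen).smul₀ (by positivity : (0:ℝ) < 1/(n+1)).ne').measurableSet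
  · rw [preim_Ioi hA h]
    exact ((hA.isOpen).smul₀ h.ne').measurableSet
lemma mTail_nonneg (ν : Measure ℝ) (x : ℝ) : 0 ≤ mTail ν x := ENNReal.toReal_nonneg

lemma mTail_anti (ν : Measure ℝ) [IsFiniteMeasure ν] {x y : ℝ} (h : x ≤ y) :
    mTail ν y ≤ mTail ν x :=
  ENNReal.toReal_le_toReal (measure_ne_top _ _) (measure_ne_top _ _) |>.2
    (measure_mono (Ioi_subset_Ioi h))

lemma tendsto_measure_Ioi (ρ : Measure ℝ) [IsFiniteMeasure ρ] :
    Tendsto (fun x => ρ (Set.Ioi x)) atTop (𝓝 0) := by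
  rw [ENNReal.tendsto_nhds_zero]
  intro ε hε
  have hseq : Tendsto (fun n : ℕ => ρ (Set.Ioi (n : ℝ))) atTop (𝓝 (ρ (⋂ n : ℕ, Set.Ioi (n : ℝ)))) := by
    apply tendsto_measure_iInter_atTop (fun n => measurableSet_Ioi.nullMeasurableSet)
    · intro m n hmn
      exact Ioi_subset_Ioi (by exact_mod_cast hmn)
    · exact ⟨0, measure_ne_top _ _⟩
  have hempty : (⋂ n : ℕ, Set.Ioi (n : ℝ)) = ∅ := by
    ext x
    simp only [mem_iInter, mem_Ioi, mem_empty_iff_false, iff_false, not_forall, not_lt]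
    obtain ⟨n, hn⟩ := exists_nat_ge x
    exact ⟨n, hn⟩
  rw [hempty, measure_empty] at hseq
  have := (ENNReal.tendsto_nhds_zero.1 hseq) ε hε
  obtain ⟨N, hN⟩ := eventually_atTop.1 this
  rw [eventually_atTop]
  exact ⟨N, fun x hx => le_trans (measure_mono (Ioi_subset_Ioi (le_trans (by exact_mod_cast le_refl (N:ℝ)) hx))) (hN N le_rfl)⟩

lemma tendsto_mTail (ρ : Measure ℝ) [IsFineMeasure : IsFiniteMeasure ρ] :
    Tendsto (fun x => mTail ρ x) atTop (𝓝 0) := by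
  have := (ENNReal.tendsto_toReal (a := 0) (by simp)).comp (tendsto_measure_Ioi ρ)
  exact this

/-- From long-tailedness, the tail is everywhere positive. -/
lemma mTail_pos_of_memL (ν : Measure ℝ) [IsFiniteMeasure ν] (hL : MemL ν) (x : ℝ) :
    0 < mTail ν x := by
  rcases (mTail_nonneg ν x).lt_or_eq with h | h
  · exact h
  have hzero : ∀ y ≥ x, mTail ν y = 0 := fun y hy =>
    le_antisymm (h ▸ mTail_anti ν hy) (mTail_nonneg ν y)
  have h1 := hL 1 one_pos
  have hev : (fun t => mTail ν (t - 1) / mTail ν t) =ᶠ[atTop] (fun _ => (0:ℝ)) := by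
    filter_upwards [eventually_ge_atTop (x + 1)] with t ht
    rw [hzero (t-1) (by linarith), zero_div]
  have : Tendsto (fun _ : ℝ => (0:ℝ)) atTop (𝓝 1) := h1.congr' hev
  have := tendsto_const_nhds_iff.1 this
  norm_num at this

/-- The central planar event. -/
def Ex (x : ℝ) : Set (ℝ × ℝ) := {p : ℝ × ℝ | x < p.1 + p.2 ∧ p.1 ≤ x ∧ p.2 ≤ x}

lemma measurable_Ex (x : ℝ) : MeasurableSet (Ex x) := by
  apply MeasurableSet.inter
  · exact measurableSet_lt measurable_const (measurable_fst.add measurable_snd)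
  · exact ((measurable_fst (measurableSet_Iic)).inter (measurable_snd (measurableSet_Iic)))

/-- Decomposition of the convolution tail (for measures on `[0,∞)`). -/
lemma conv_tail_decomp (ρ : Measure ℝ) [IsProbabilityMeasure ρ]
    (h0 : ρ (Set.Iio 0) = 0) (x : ℝ) :
    (mConv ρ ρ) (Set.Ioi x) =
      (ρ.prod ρ) (Ex x) + ρ (Set.Ioi x) + ρ (Set.Iic x) * ρ (Set.Ioi x) := by
  have hadd : Measurable (fun p : ℝ × ℝ => p.1 + p.2) := measurable_fst.add measurable_snd
  rw [mConv, Measure.map_apply hadd measurableSet_Ioi]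
  set B₁ : Set (ℝ × ℝ) := Set.Ioi x ×ˢ (univ : Set ℝ) with hB₁
  set B₂ : Set (ℝ × ℝ) := Set.Iic x ×ˢ Set.Ioi x with hB₂
  set N : Set (ℝ × ℝ) := (Set.Iio 0 ×ˢ (univ : Set ℝ)) ∪ ((univ : Set ℝ) ×ˢ Set.Iio 0) with hN
  have hNnull : (ρ.prod ρ) N = 0 := by
    rw [hN]
    apply measure_union_null <;> rw [Measure.prod_prod] <;> simp [h0]
  set T : Set (ℝ × ℝ) := Ex x ∪ (B₁ ∪ B₂) with hT
  have haeeq : ((fun p : ℝ × ℝ => p.1 + p.2) ⁻¹' (Set.Ioi x) : Set (ℝ × ℝ))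
      =ᵐ[ρ.prod ρ] T := by
    rw [Filter.eventuallyEq_set]
    have : ∀ p : ℝ × ℝ, p ∉ N →
        (p ∈ (fun p : ℝ × ℝ => p.1 + p.2) ⁻¹' (Set.Ioi x) ↔ p ∈ T) := by
      rintro ⟨a, b⟩ hp
      simp only [hN, mem_union, mem_prod, mem_Iio, mem_univ, and_true, true_and, not_or,
        not_lt] at hp
      obtain ⟨ha0, hb0⟩ := hp
      simp only [hT, mem_preimage, mem_Ioi, Ex, mem_union, mem_setOf_eq, hB₁, hB₂, mem_prod,
        mem_univ, and_true, mem_Iic]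
      constructor
      · intro hs
        rcases le_or_gt a x with h1 | h1
        · rcases le_or_gt b x with h2 | h2
          · exact Or.inl ⟨hs, h1, h2⟩
          · exact Or.inr (Or.inr ⟨h1, h2⟩)
        · exact Or.inr (Or.inl h1)
      · rintro (⟨hs, _, _⟩ | h1 | ⟨h1, h2⟩)
        · exact hs
        · linarith
        · linarith
    have hsub : {p : ℝ × ℝ | ¬(p ∈ (fun p : ℝ × ℝ => p.1 + p.2) ⁻¹' (Set.Ioi x) ↔
        p ∈ T)} ⊆ N := fun p hp => by
      by_contra hpn
      exact hp (this p hpn)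
    have : (ρ.prod ρ) {p : ℝ × ℝ | ¬(p ∈ (fun p : ℝ × ℝ => p.1 + p.2) ⁻¹' (Set.Ioi x) ↔
        p ∈ T)} = 0 :=
      measure_mono_null hsub hNnull
    exact this
  rw [measure_congr haeeq, hT]
  have hd1 : Disjoint (Ex x) (B₁ ∪ B₂) := by
    rw [disjoint_union_right]
    constructor
    · rw [Set.disjoint_left]
      rintro ⟨a, b⟩ ⟨_, h1, _⟩ h2
      simp only [hB₁, mem_prod, mem_Ioi, mem_univ, and_true] at h2
      exact absurd h1 (not_le.2 h2)
    · rw [Set.disjoint_left]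
      rintro ⟨a, b⟩ ⟨_, _, h1⟩ h2
      simp only [hB₂, mem_prod, mem_Ioi, mem_Iic] at h2
      exact absurd h1 (not_le.2 h2.2)
  have hd2 : Disjoint B₁ B₂ := by
    rw [Set.disjoint_left]
    rintro ⟨a, b⟩ h1 h2
    simp only [hB₁, hB₂, mem_prod, mem_Ioi, mem_univ, and_true, mem_Iic] at h1 h2
    exact absurd h1 (not_lt.2 h2.1)
  have hmB₁ : MeasurableSet B₁ := measurableSet_Ioi.prod MeasurableSet.univ
  have hmB₂ : MeasurableSet B₂ := measurableSet_Iic.prod measurableSet_Ioi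
  rw [measure_union hd1 (hmB₁.union hmB₂), measure_union hd2 hmB₂]
  rw [Measure.prod_prod, Measure.prod_prod]
  simp [add_assoc]

lemma master (μ ν : Measure ℝ) [IsProbabilityMeasure μ] [IsProbabilityMeasure ν]
    (k : ℝ≥0∞) (hk : k ≠ ⊤) (x₀ h x : ℝ)
    (hcomp : ∀ s : ℝ, x₀ ≤ s → ν (Set.Ioi s) ≤ k * μ (Set.Ioi s))
    (hh0 : 0 ≤ h) (hhx₀ : x₀ ≤ h) (hx : 2*h + 1 ≤ x) :
    (ν.prod ν) (Ex x) ≤ 2 * ν (Set.Ioc (x-h) x)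
      + k * (k * ((μ.prod μ) (Ex x) + μ (Set.Ioi h) * μ (Set.Ioi x))
          + ν (Set.Ioi h) * μ (Set.Ioi (x-h))) := by
  set EG : Set (ℝ × ℝ) := (Set.Ioc h x ×ˢ Set.Ioc h x) ∩ {p : ℝ × ℝ | x < p.1 + p.2} with hEGdef
  set E1 : Set (ℝ × ℝ) := {p : ℝ × ℝ | p.1 ∈ Set.Ioc h x ∧ max h (x - p.1) < p.2} with hE1def
  set E1' : Set (ℝ × ℝ) := {p : ℝ × ℝ | p.2 ∈ Set.Ioc h x ∧ max h (x - p.2) < p.1} with hE1'def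
  set E2 : Set (ℝ × ℝ) := {p : ℝ × ℝ | p.1 ∈ Set.Ioc h (x-h) ∧ x - p.1 < p.2} with hE2def
  have hmEG : MeasurableSet EG :=
    (measurableSet_Ioc.prod measurableSet_Ioc).inter
      (measurableSet_lt measurable_const (measurable_fst.add measurable_snd))
  have hmE1 : MeasurableSet E1 := by
    apply MeasurableSet.inter
    · exact measurable_fst measurableSet_Ioc
    · exact measurableSet_lt (measurable_const.max (measurable_const.sub measurable_fst))
        measurable_snd
  have hmE1' : MeasurableSet E1' := by
    apply MeasurableSet.inter
    · exact measurable_snd measurableSet_Ioc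
    · exact measurableSet_lt (measurable_const.max (measurable_const.sub measurable_snd))
        measurable_fst
  have hmE2 : MeasurableSet E2 := by
    apply MeasurableSet.inter
    · exact measurable_fst measurableSet_Ioc
    · exact measurableSet_lt (measurable_const.sub measurable_fst) measurable_snd
  -- (a) covering of Ex
  have ha : (ν.prod ν) (Ex x) ≤ 2 * ν (Set.Ioc (x-h) x) + (ν.prod ν) EG := by
    have hcov : Ex x ⊆ (Set.Iic h ×ˢ Set.Ioc (x-h) x) ∪
        ((Set.Ioc (x-h) x ×ˢ Set.Iic h) ∪ EG) := by
      rintro ⟨a, b⟩ ⟨hs, ha1, hb1⟩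
      simp only [mem_union, mem_prod, mem_Iic, mem_Ioc, hEGdef, mem_inter_iff, mem_setOf_eq]
      rcases le_or_gt a h with h1 | h1
      · exact Or.inl ⟨h1, by linarith, hb1⟩
      · rcases le_or_gt b h with h2 | h2
        · exact Or.inr (Or.inl ⟨⟨by linarith, ha1⟩, h2⟩)
        · exact Or.inr (Or.inr ⟨⟨⟨h1, ha1⟩, h2, hb1⟩, hs⟩)
    calc (ν.prod ν) (Ex x) ≤ (ν.prod ν) ((Set.Iic h ×ˢ Set.Ioc (x-h) x) ∪
        ((Set.Ioc (x-h) x ×ˢ Set.Iic h) ∪ EG)) := measure_mono hcov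
      _ ≤ (ν.prod ν) (Set.Iic h ×ˢ Set.Ioc (x-h) x) +
          ((ν.prod ν) (Set.Ioc (x-h) x ×ˢ Set.Iic h) + (ν.prod ν) EG) :=
        le_trans (measure_union_le _ _) (by gcongr; exact measure_union_le _ _)
      _ ≤ ν (Set.Ioc (x-h) x) + (ν (Set.Ioc (x-h) x) + (ν.prod ν) EG) := by
        rw [Measure.prod_prod, Measure.prod_prod]
        gcongr
        · calc ν (Set.Iic h) * ν (Set.Ioc (x-h) x) ≤ 1 * ν (Set.Ioc (x-h) x) :=
            mul_le_mul_left prob_le_one _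
          _ = ν (Set.Ioc (x-h) x) := one_mul _
        · calc ν (Set.Ioc (x-h) x) * ν (Set.Iic h) ≤ ν (Set.Ioc (x-h) x) * 1 :=
            mul_le_mul_right prob_le_one _
          _ = ν (Set.Ioc (x-h) x) := mul_one _
      _ = 2 * ν (Set.Ioc (x-h) x) + (ν.prod ν) EG := by ring
  -- (b) first Fubini bound
  have hb : (ν.prod ν) EG ≤ k * (ν.prod μ) E1 := by
    rw [Measure.prod_apply hmEG, Measure.prod_apply hmE1,
      ← lintegral_const_mul' k _ hk]
    apply lintegral_mono
    intro a
    by_cases haIoc : a ∈ Set.Ioc h x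
    · have hsub : Prod.mk a ⁻¹' EG ⊆ Set.Ioi (max h (x - a)) := by
        rintro b ⟨⟨_, hb1⟩, hb2⟩
        simp only [mem_Ioc] at hb1
        simp only [mem_setOf_eq] at hb2
        exact mem_Ioi.2 (max_lt hb1.1 (by linarith))
      have hsec : Prod.mk a ⁻¹' E1 = Set.Ioi (max h (x - a)) := by
        ext b
        constructor
        · rintro ⟨_, h2⟩
          exact h2
        · intro h2
          exact ⟨haIoc, h2⟩
      calc ν (Prod.mk a ⁻¹' EG) ≤ ν (Set.Ioi (max h (x - a))) := measure_mono hsub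
        _ ≤ k * μ (Set.Ioi (max h (x - a))) :=
          hcomp _ (le_trans hhx₀ (le_max_left _ _))
        _ = k * μ (Prod.mk a ⁻¹' E1) := by rw [hsec]
    · have : Prod.mk a ⁻¹' EG = ∅ := by
        ext b
        simp only [mem_preimage, hEGdef, mem_inter_iff, mem_prod, mem_setOf_eq,
          mem_empty_iff_false, iff_false]
        rintro ⟨⟨h1, _⟩, _⟩
        exact haIoc h1
      simp [this]
  -- (c) swap
  have hc : (ν.prod μ) E1 = (μ.prod ν) E1' := by
    have hpre : Prod.swap ⁻¹' E1 = E1' := by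
      ext ⟨t, y⟩
      simp only [mem_preimage, Prod.swap_prod_mk, hE1def, hE1'def, mem_setOf_eq]
    rw [← Measure.prod_swap, Measure.map_apply measurable_swap hmE1, hpre]
  -- (d) second Fubini bound
  have hd : (μ.prod ν) E1' ≤ k * (μ.prod μ) E2 + ν (Set.Ioi h) * μ (Set.Ioi (x-h)) := by
    rw [Measure.prod_apply hmE1', Measure.prod_apply hmE2,
      ← lintegral_const_mul' k _ hk,
      ← lintegral_indicator_const measurableSet_Ioi (ν (Set.Ioi h)),
      ← lintegral_add_left]
    · apply lintegral_mono
      intro t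
      rcases le_or_gt t (x - h) with ht | ht
      · rcases lt_or_ge h t with ht2 | ht2
        · have hsub : Prod.mk t ⁻¹' E1' ⊆ Set.Ioi (x - t) := by
            rintro y ⟨hy1, hy2⟩
            simp only [mem_setOf_eq] at hy2
            have := (max_lt_iff.1 hy2).2
            exact mem_Ioi.2 (by linarith)
          have hsec : Prod.mk t ⁻¹' E2 = Set.Ioi (x - t) := by
            ext b
            simp [hE2def, mem_Ioc, ht2, ht, mem_Ioi]
          calc ν (Prod.mk t ⁻¹' E1') ≤ ν (Set.Ioi (x - t)) := measure_mono hsub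
            _ ≤ k * μ (Set.Ioi (x - t)) := hcomp _ (by linarith)
            _ = k * μ (Prod.mk t ⁻¹' E2) := by rw [hsec]
            _ ≤ k * μ (Prod.mk t ⁻¹' E2) +
                (Set.Ioi (x-h)).indicator (fun _ => ν (Set.Ioi h)) t := le_self_add
        · have hempty : Prod.mk t ⁻¹' E1' = ∅ := by
            ext y
            simp only [mem_preimage, hE1'def, mem_setOf_eq, mem_empty_iff_false, iff_false,
              not_and]
            intro _
            exact not_lt.2 (le_trans ht2 (le_max_left _ _))
          simp [hempty]
      · have hsub : Prod.mk t ⁻¹' E1' ⊆ Set.Ioi h := by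
          rintro y ⟨hy1, _⟩
          exact mem_Ioi.2 hy1.1
        have hind : (Set.Ioi (x-h)).indicator (fun _ => ν (Set.Ioi h)) t = ν (Set.Ioi h) :=
          Set.indicator_of_mem (mem_Ioi.2 ht) _
        calc ν (Prod.mk t ⁻¹' E1') ≤ ν (Set.Ioi h) := measure_mono hsub
          _ = (Set.Ioi (x-h)).indicator (fun _ => ν (Set.Ioi h)) t := hind.symm
          _ ≤ k * μ (Prod.mk t ⁻¹' E2) +
              (Set.Ioi (x-h)).indicator (fun _ => ν (Set.Ioi h)) t := le_add_self
    · exact (measurable_measure_prodMk_left hmE2).const_mul k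
  -- (e) back to Ex for μ
  have he : (μ.prod μ) E2 ≤ (μ.prod μ) (Ex x) + μ (Set.Ioi h) * μ (Set.Ioi x) := by
    have hcov : E2 ⊆ Ex x ∪ (Set.Ioi h ×ˢ Set.Ioi x) := by
      rintro ⟨t, s⟩ ⟨ht, hs⟩
      simp only [mem_Ioc] at ht
      simp only [mem_setOf_eq] at hs
      rcases le_or_gt s x with h2 | h2
      · exact Or.inl ⟨by linarith, by linarith, h2⟩
      · exact Or.inr ⟨mem_Ioi.2 ht.1, mem_Ioi.2 h2⟩
    calc (μ.prod μ) E2 ≤ (μ.prod μ) (Ex x ∪ (Set.Ioi h ×ˢ Set.Ioi x)) := measure_mono hcov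
      _ ≤ (μ.prod μ) (Ex x) + (μ.prod μ) (Set.Ioi h ×ˢ Set.Ioi x) := measure_union_le _ _
      _ = (μ.prod μ) (Ex x) + μ (Set.Ioi h) * μ (Set.Ioi x) := by rw [Measure.prod_prod]
  -- assemble
  calc (ν.prod ν) (Ex x) ≤ 2 * ν (Set.Ioc (x-h) x) + (ν.prod ν) EG := ha
    _ ≤ 2 * ν (Set.Ioc (x-h) x) + k * (μ.prod ν) E1' :=
      add_le_add_right (le_trans hb (le_of_eq (by rw [hc]))) _
    _ ≤ 2 * ν (Set.Ioc (x-h) x) +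
        k * (k * (μ.prod μ) E2 + ν (Set.Ioi h) * μ (Set.Ioi (x-h))) :=
      add_le_add_right (mul_le_mul_right hd _) _
    _ ≤ 2 * ν (Set.Ioc (x-h) x)
      + k * (k * ((μ.prod μ) (Ex x) + μ (Set.Ioi h) * μ (Set.Ioi x))
          + ν (Set.Ioi h) * μ (Set.Ioi (x-h))) := by
      gcongr

noncomputable def DG (ρ : Measure ℝ) (x : ℝ) : ℝ := ((ρ.prod ρ) (Ex x)).toReal

lemma mTail_Ioc (ν : Measure ℝ) [IsFiniteMeasure ν] {a b : ℝ} (hab : a ≤ b) :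
    (ν (Set.Ioc a b)).toReal = mTail ν a - mTail ν b := by
  have h1 : Set.Ioc a b = Set.Ioi a \ Set.Ioi b := (Set.Ioi_diff_Ioi).symm
  rw [h1, measure_diff (Set.Ioi_subset_Ioi hab) measurableSet_Ioi.nullMeasurableSet
    (measure_ne_top _ _), ENNReal.toReal_sub_of_le (measure_mono (Set.Ioi_subset_Ioi hab))
    (measure_ne_top _ _)]
  rfl

lemma DG_nonneg (ρ : Measure ℝ) (x : ℝ) : 0 ≤ DG ρ x := ENNReal.toReal_nonneg

lemma Stail_eq (ρ : Measure ℝ) [IsProbabilityMeasure ρ] (h0 : ρ (Set.Iio 0) = 0) (x : ℝ) :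
    mTail (mConv ρ ρ) x = DG ρ x + mTail ρ x + (1 - mTail ρ x) * mTail ρ x := by
  have hIic : (ρ (Set.Iic x)).toReal = 1 - mTail ρ x := by
    have h1 : Set.Iic x = (Set.Ioi x)ᶜ := by simp
    rw [h1, measure_compl measurableSet_Ioi (measure_ne_top _ _), measure_univ,
      ENNReal.toReal_sub_of_le prob_le_one (by simp)]
    simp [mTail]
  rw [mTail, conv_tail_decomp ρ h0 x,
    ENNReal.toReal_add (by finiteness) (by finiteness),
    ENNReal.toReal_add (by finiteness) (by finiteness),
    ENNReal.toReal_mul, hIic]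
  rfl

lemma ratio_eq (ρ : Measure ℝ) [IsProbabilityMeasure ρ] (h0 : ρ (Set.Iio 0) = 0)
    {x : ℝ} (hx : mTail ρ x ≠ 0) :
    mTail (mConv ρ ρ) x / mTail ρ x = DG ρ x / mTail ρ x + 1 + (1 - mTail ρ x) := by
  rw [Stail_eq ρ h0 x]
  field_simp

lemma D_div_tendsto_zero (ρ : Measure ℝ) [IsProbabilityMeasure ρ]
    (h0 : ρ (Set.Iio 0) = 0) (hS : MemS ρ) (hpos : ∀ᶠ x in atTop, mTail ρ x ≠ 0) :
    Tendsto (fun x => DG ρ x / mTail ρ x) atTop (𝓝 0) := by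
  have h1 : Tendsto (fun x => mTail (mConv ρ ρ) x / mTail ρ x - 1 - (1 - mTail ρ x))
      atTop (𝓝 (2 - 1 - (1 - 0))) :=
    (hS.sub tendsto_const_nhds).sub (tendsto_const_nhds.sub (tendsto_mTail ρ))
  norm_num at h1
  apply h1.congr'
  filter_upwards [hpos] with x hx
  rw [ratio_eq ρ h0 hx]
  ring

theorem key (μ ν : Measure ℝ) [IsProbabilityMeasure μ] [IsProbabilityMeasure ν]
    (h0μ : μ (Set.Iio 0) = 0) (h0ν : ν (Set.Iio 0) = 0)
    (hS : MemS μ) (hL : MemL ν)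
    (c₁ c₂ x₀ : ℝ) (hc₁ : 0 < c₁)
    (hcomp : ∀ s : ℝ, x₀ ≤ s → c₁ * mTail ν s ≤ mTail μ s ∧ mTail μ s ≤ c₂ * mTail ν s) :
    MemS ν := by
  have hνpos : ∀ x, 0 < mTail ν x := mTail_pos_of_memL ν hL
  have hμpos : ∀ s, x₀ ≤ s → 0 < mTail μ s := fun s hs =>
    lt_of_lt_of_le (mul_pos hc₁ (hνpos s)) (hcomp s hs).1
  have hc₂ : 0 < c₂ := by
    have h1 := hμpos x₀ le_rfl
    have h2 := (hcomp x₀ le_rfl).2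
    nlinarith [hνpos x₀]
  set k : ℝ≥0∞ := ENNReal.ofReal c₁⁻¹ with hkdef
  have hk : k ≠ ⊤ := ENNReal.ofReal_ne_top
  have hcompENN : ∀ s : ℝ, x₀ ≤ s → ν (Set.Ioi s) ≤ k * μ (Set.Ioi s) := by
    intro s hs
    have h1 : (ν (Set.Ioi s)).toReal ≤ c₁⁻¹ * (μ (Set.Ioi s)).toReal := by
      rw [le_inv_mul_iff₀ hc₁]
      exact (hcomp s hs).1
    calc ν (Set.Ioi s) = ENNReal.ofReal ((ν (Set.Ioi s)).toReal) :=
        (ENNReal.ofReal_toReal (measure_ne_top _ _)).symm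
      _ ≤ ENNReal.ofReal (c₁⁻¹ * (μ (Set.Ioi s)).toReal) := ENNReal.ofReal_le_ofReal h1
      _ = k * ENNReal.ofReal ((μ (Set.Ioi s)).toReal) := by
        rw [ENNReal.ofReal_mul (by positivity)]
      _ = k * μ (Set.Ioi s) := by rw [ENNReal.ofReal_toReal (measure_ne_top _ _)]
  have hεF : Tendsto (fun x => DG μ x / mTail μ x) atTop (𝓝 0) :=
    D_div_tendsto_zero μ h0μ hS
      ((eventually_ge_atTop x₀).mono fun x hx => (hμpos x hx).ne')
  -- main claim
  have hmain : Tendsto (fun x => DG ν x / mTail ν x) atTop (𝓝 0) := by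
    rw [NormedAddCommGroup.tendsto_nhds_zero]
    intro ε hε
    -- choose h
    have hLh : Tendsto (fun h => c₁⁻¹ * c₁⁻¹ * c₂ * mTail μ h + c₁⁻¹ * c₂ * mTail ν h)
        atTop (𝓝 0) := by
      have := ((tendsto_mTail μ).const_mul (c₁⁻¹ * c₁⁻¹ * c₂)).add
        ((tendsto_mTail ν).const_mul (c₁⁻¹ * c₂))
      simpa using this
    obtain ⟨h, hh1, hhx₀, hhL⟩ :
        ∃ h : ℝ, 1 ≤ h ∧ x₀ ≤ h ∧
          c₁⁻¹ * c₁⁻¹ * c₂ * mTail μ h + c₁⁻¹ * c₂ * mTail ν h < ε / 2 := by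
      have h1 := hLh.eventually_lt_const (show (0:ℝ) < ε / 2 by positivity)
      obtain ⟨h, hh⟩ := ((eventually_ge_atTop (1:ℝ)).and ((eventually_ge_atTop x₀).and h1)).exists
      exact ⟨h, hh.1, hh.2.1, hh.2.2⟩
    have hh0 : (0:ℝ) ≤ h := le_trans zero_le_one hh1
    -- the eventual bound
    set r : ℝ → ℝ := fun x => mTail ν (x - h) / mTail ν x with hrdef
    have hr1 : Tendsto r atTop (𝓝 1) := hL h (lt_of_lt_of_le one_pos hh1)
    set RHS2 : ℝ → ℝ := fun x => 2 * (r x - 1)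
        + c₁⁻¹ * (c₁⁻¹ * (DG μ x / mTail μ x * c₂ + mTail μ h * c₂) + mTail ν h * c₂ * r x)
      with hRHS2def
    have hRHS2lim : Tendsto RHS2 atTop
        (𝓝 (2 * (1 - 1) + c₁⁻¹ * (c₁⁻¹ * (0 * c₂ + mTail μ h * c₂) + mTail ν h * c₂ * 1))) := by
      apply Tendsto.add
      · exact (hr1.sub tendsto_const_nhds).const_mul 2
      · apply Tendsto.const_mul
        apply Tendsto.add
        · exact (((hεF.mul_const c₂).add tendsto_const_nhds).const_mul c₁⁻¹)
        · exact (hr1.const_mul _)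
    have hlim_lt : 2 * (1 - 1) + c₁⁻¹ * (c₁⁻¹ * (0 * c₂ + mTail μ h * c₂) + mTail ν h * c₂ * 1)
        < ε := by
      have : 2 * (1 - 1) + c₁⁻¹ * (c₁⁻¹ * (0 * c₂ + mTail μ h * c₂) + mTail ν h * c₂ * 1)
          = c₁⁻¹ * c₁⁻¹ * c₂ * mTail μ h + c₁⁻¹ * c₂ * mTail ν h := by ring
      rw [this]
      linarith
    have hevRHS : ∀ᶠ x in atTop, RHS2 x < ε := hRHS2lim.eventually_lt_const hlim_lt
    filter_upwards [hevRHS, eventually_ge_atTop (2*h+1)] with x hxRHS hx2h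
    have hG : 0 < mTail ν x := hνpos x
    have hxx₀ : x₀ ≤ x := by linarith
    have hxhx₀ : x₀ ≤ x - h := by linarith
    have hFx : 0 < mTail μ x := hμpos x hxx₀
    have hmaster := master μ ν k hk x₀ h x hcompENN hh0 hhx₀ hx2h
    have h1 : DG ν x ≤ 2 * (mTail ν (x-h) - mTail ν x)
        + c₁⁻¹ * (c₁⁻¹ * (DG μ x + mTail μ h * mTail μ x) + mTail ν h * mTail μ (x-h)) := by
      have h2 := (ENNReal.toReal_le_toReal (measure_ne_top _ _) (by finiteness)).2 hmaster
      rw [ENNReal.toReal_add (by finiteness) (by finiteness),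
        ENNReal.toReal_mul, ENNReal.toReal_mul,
        ENNReal.toReal_add (by finiteness) (by finiteness),
        ENNReal.toReal_mul, ENNReal.toReal_add (by finiteness) (by finiteness),
        ENNReal.toReal_mul, ENNReal.toReal_mul,
        mTail_Ioc ν (by linarith : x - h ≤ x)] at h2
      have hkr : k.toReal = c₁⁻¹ := ENNReal.toReal_ofReal (by positivity)
      rw [hkr] at h2
      simpa [DG, mTail] using h2
    have hsub1 : mTail ν (x-h) = r x * mTail ν x := by
      rw [hrdef]
      field_simp
    have hsub2 : DG μ x = DG μ x / mTail μ x * mTail μ x := by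
      field_simp
    have h2 : 2 * (mTail ν (x-h) - mTail ν x)
        + c₁⁻¹ * (c₁⁻¹ * (DG μ x + mTail μ h * mTail μ x) + mTail ν h * mTail μ (x-h))
        ≤ RHS2 x * mTail ν x := by
      have hb1 : mTail μ x ≤ c₂ * mTail ν x := (hcomp x hxx₀).2
      have hb2 : mTail μ (x-h) ≤ c₂ * mTail ν (x-h) := (hcomp (x-h) hxhx₀).2
      have hεF0 : 0 ≤ DG μ x / mTail μ x := div_nonneg (DG_nonneg μ x) hFx.le
      have hRHSexp : RHS2 x * mTail ν x = 2 * (r x * mTail ν x - mTail ν x)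
          + c₁⁻¹ * (c₁⁻¹ * ((DG μ x / mTail μ x) * (c₂ * mTail ν x)
              + mTail μ h * (c₂ * mTail ν x))
            + mTail ν h * (c₂ * (r x * mTail ν x))) := by
        rw [hRHS2def]
        ring
      have e1 : DG μ x ≤ DG μ x / mTail μ x * (c₂ * mTail ν x) := by
        calc DG μ x = DG μ x / mTail μ x * mTail μ x := hsub2
          _ ≤ DG μ x / mTail μ x * (c₂ * mTail ν x) := mul_le_mul_of_nonneg_left hb1 hεF0
      have e2 : mTail μ h * mTail μ x ≤ mTail μ h * (c₂ * mTail ν x) :=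
        mul_le_mul_of_nonneg_left hb1 (mTail_nonneg μ h)
      have e3 : mTail ν h * mTail μ (x-h) ≤ mTail ν h * (c₂ * (r x * mTail ν x)) :=
        mul_le_mul_of_nonneg_left (hb2.trans (le_of_eq (by rw [← hsub1]))) (mTail_nonneg ν h)
      have hinv : (0:ℝ) ≤ c₁⁻¹ := by positivity
      rw [hRHSexp]
      rw [show (2:ℝ) * (r x * mTail ν x - mTail ν x)
          = 2 * (mTail ν (x-h) - mTail ν x) from by rw [hsub1]]
      exact add_le_add_right (mul_le_mul_of_nonneg_left
        (add_le_add (mul_le_mul_of_nonneg_left (add_le_add e1 e2) hinv) e3) hinv) _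
    have hdiv : DG ν x / mTail ν x ≤ RHS2 x :=
      (div_le_iff₀ hG).2 (h1.trans h2)
    rw [Real.norm_eq_abs, abs_of_nonneg (div_nonneg (DG_nonneg ν x) hG.le)]
    exact lt_of_le_of_lt hdiv hxRHS
  -- conclude MemS ν
  have : Tendsto (fun x => DG ν x / mTail ν x + 1 + (1 - mTail ν x)) atTop
      (𝓝 (0 + 1 + (1 - 0))) :=
    (hmain.add tendsto_const_nhds).add (tendsto_const_nhds.sub (tendsto_mTail ν))
  norm_num at this
  apply this.congr
  intro x
  rw [ratio_eq ν h0ν (hνpos x).ne']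


section Bridge

variable {P : Measure Ω} {A : Set (Fin d → ℝ)} {X : Ω → Fin d → ℝ}

lemma measurable_suprA_comp (hA : IsRSet d A) (hX : Measurable X) :
    Measurable fun ω => suprA A (X ω) := (measurable_suprA hA).comp hX

lemma FA_prob [IsProbabilityMeasure P] (hA : IsRSet d A) (hX : Measurable X) :
    IsProbabilityMeasure (FA P A X) :=
  Measure.isProbabilityMeasure_map (measurable_suprA_comp hA hX).aemeasurable

lemma FA_Iio_zero (hA : IsRSet d A) (hX : Measurable X) :
    FA P A X (Set.Iio 0) = 0 := by
  rw [FA, Measure.map_apply (measurable_suprA_comp hA hX) measurableSet_Iio]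
  have : (fun ω => suprA A (X ω)) ⁻¹' (Set.Iio 0) = ∅ := by
    ext ω
    simp [not_lt.2 (suprA_nonneg hA (X ω))]
  rw [this, measure_empty]

lemma mTail_FA (hA : IsRSet d A) (hX : Measurable X) {x : ℝ} (hx : 0 < x) :
    mTail (FA P A X) x = vTail P A X x := by
  rw [mTail, FA, Measure.map_apply (measurable_suprA_comp hA hX) measurableSet_Ioi]
  have : (fun ω => suprA A (X ω)) ⁻¹' (Set.Ioi x) = {ω | X ω ∈ x • A} := by
    ext ω
    exact lt_suprA_iff hA hx (X ω)
  rw [this]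
  rfl

end Bridge

end Aux

/-- Closure of `𝓢_A` (resp. `𝓐_A`) under weak tail-equivalence:
if `F₁ ∈ 𝓢_A` (resp. `𝓐_A`), `F₂ ∈ 𝓛_A` (resp. `𝓣_A`) and `F₁(xA) ≍ F₂(xA)`,
then `F₂ ∈ 𝓢_A` (resp. `𝓐_A`). -/
theorem statement3 (P : Measure Ω) [IsProbabilityMeasure P]
    (A : Set (Fin d → ℝ)) (hA : IsRSet d A)
    (X₁ X₂ : Ω → Fin d → ℝ) (hX₁ : Measurable X₁) (hX₂ : Measurable X₂)
    (hweq : WeakTailEquiv (vTail P A X₁) (vTail P A X₂)) :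
    (MemS (FA P A X₁) → MemL (FA P A X₂) → MemS (FA P A X₂)) ∧
    (MemA (FA P A X₁) → MemT (FA P A X₂) → MemA (FA P A X₂)) := by
  have hμprob : IsProbabilityMeasure (FA P A X₁) := FA_prob hA hX₁
  have hνprob : IsProbabilityMeasure (FA P A X₂) := FA_prob hA hX₂
  obtain ⟨c₁, c₂, hc₁, hev⟩ := hweq
  have hev' : ∀ᶠ x in atTop, c₁ * mTail (FA P A X₂) x ≤ mTail (FA P A X₁) x ∧
      mTail (FA P A X₁) x ≤ c₂ * mTail (FA P A X₂) x := by
    filter_upwards [hev, eventually_gt_atTop (0:ℝ)] with x hx hx0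
    rw [mTail_FA hA hX₁ hx0, mTail_FA hA hX₂ hx0]
    exact hx
  obtain ⟨x₀, hx₀⟩ := eventually_atTop.1 hev'
  have hS2 : MemS (FA P A X₁) → MemL (FA P A X₂) → MemS (FA P A X₂) := by
    intro hS hL
    exact key (FA P A X₁) (FA P A X₂) (FA_Iio_zero hA hX₁) (FA_Iio_zero hA hX₂)
      hS hL c₁ c₂ x₀ hc₁ (fun s hs => hx₀ s hs)
  exact ⟨hS2, fun hAmem hT => ⟨hS2 hAmem.1 hT.1, hT.2⟩⟩


end Paper
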